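/- Let $S$ be an archimedean subsemiring of a commutative ring $A$ and $M$ an $S$-module. Let $f \in A$ such that for every maximal ideal $\mathfrak{m}$ of $A$ there exists $s \in S$ with $s \notin \mathfrak{m}$ and $sf \in M$. Then $nf \in M$ for some $n \in \mathbb{N}$. -/

import Mathlib

/-- The set of states for the local-global criterion proof. -/
def lgcStates {A : Type*} [CommRing A] (Gs Ms : Set A) (u : A) : Set (A → ℝ) :=
  {φ | (∀ x ∈ Gs, ∀ y ∈ Gs, φ (x + y) = φ x + φ y) ∧ (∀ x ∈ Gs, x ∈ Ms → 0 ≤ φ x) ∧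
    φ u = 1 ∧ ∀ x, x ∉ Gs → φ x = 0}

/-- Natural multiples stay in an additively closed set containing 0. -/
private theorem lgc_G_nat {A : Type*} [CommRing A] {Gs : Set A}
    (hG0 : (0:A) ∈ Gs) (hGadd : ∀ x ∈ Gs, ∀ y ∈ Gs, x + y ∈ Gs) :
    ∀ (n : ℕ), ∀ x ∈ Gs, (n : A) * x ∈ Gs := by
  intro n x hx
  induction n with
  | zero => simpa using hG0
  | succ n ih =>
      have : ((n+1 : ℕ) : A) * x = (n : A) * x + x := by push_cast; ring
      rw [this]
      exact hGadd _ ih _ hx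

private theorem lgc_G_int {A : Type*} [CommRing A] {Gs : Set A}
    (hG0 : (0:A) ∈ Gs) (hGadd : ∀ x ∈ Gs, ∀ y ∈ Gs, x + y ∈ Gs)
    (hGneg : ∀ x ∈ Gs, -x ∈ Gs) :
    ∀ (k : ℤ), ∀ x ∈ Gs, (k : A) * x ∈ Gs := by
  intro k x hx
  rcases le_or_gt 0 k with hk | hk
  · have : ((k.toNat : ℕ) : A) * x ∈ Gs := lgc_G_nat hG0 hGadd _ x hx
    rwa [show ((k.toNat : ℕ) : A) = (k : A) by
      rw [← Int.cast_natCast]; congr 1; exact Int.toNat_of_nonneg hk] at this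
  · have h1 : (((-k).toNat : ℕ) : A) * x ∈ Gs := lgc_G_nat hG0 hGadd _ x hx
    have h2 : -((((-k).toNat : ℕ) : A) * x) ∈ Gs := hGneg _ h1
    rwa [show -((((-k).toNat : ℕ) : A) * x) = (k : A) * x by
      rw [show (((-k).toNat : ℕ) : A) = ((-k : ℤ) : A) by
        rw [← Int.cast_natCast]; congr 1; omega]
      push_cast; ring] at h2

theorem lgc_state_exists {A : Type*} [CommRing A] (Gs Ms : Set A) (u f : A)
    (hG0 : (0:A) ∈ Gs) (hGadd : ∀ x ∈ Gs, ∀ y ∈ Gs, x + y ∈ Gs)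
    (hGneg : ∀ x ∈ Gs, -x ∈ Gs)
    (huG : u ∈ Gs) (hfG : f ∈ Gs)
    (hM0 : (0:A) ∈ Ms) (hMadd : ∀ x ∈ Ms, ∀ y ∈ Ms, x + y ∈ Ms)
    (hMnat : ∀ (n : ℕ), ∀ x ∈ Ms, (n : A) * x ∈ Ms)
    (huM : u ∈ Ms) (hufM : u - f ∈ Ms)
    (hbound : ∀ x ∈ Gs, ∃ c : ℕ, (c : A) * u - x ∈ Ms ∧ (c : A) * u + x ∈ Ms)
    (hstar : ∀ k : ℤ, (k : A) * u ∈ Ms → 0 ≤ k)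
    (hA : ∀ n : ℕ, 1 ≤ n → ¬((n : A) * f - u ∈ Ms)) :
    ∃ φ : A → ℝ, (∀ x ∈ Gs, ∀ y ∈ Gs, φ (x + y) = φ x + φ y) ∧
      (∀ x ∈ Gs, x ∈ Ms → 0 ≤ φ x) ∧ φ u = 1 ∧ (∀ x, x ∉ Gs → φ x = 0) ∧ φ f ≤ 0 := by
  classical
  -- cast helper
  have hcast : ∀ (k : ℤ), 0 ≤ k → ((k.toNat : ℕ) : A) = (k : A) := by
    intro k hk
    rw [← Int.cast_natCast]; congr 1; exact Int.toNat_of_nonneg hk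
  have hMint : ∀ (k : ℤ), 0 ≤ k → ∀ x ∈ Ms, (k : A) * x ∈ Ms := by
    intro k hk x hx
    have := hMnat k.toNat x hx
    rwa [hcast k hk] at this
  -- the set of lower ratios for f
  set Q : Set ℝ := {r | ∃ m : ℤ, ∃ n : ℕ, 1 ≤ n ∧ (n : A) * f - (m : A) * u ∈ Ms ∧
    r = (m : ℝ) / (n : ℝ)} with hQdef
  obtain ⟨cf, hcf1, hcf2⟩ := hbound f hfG
  have hQne : Q.Nonempty := by
    refine ⟨_, ⟨-(cf:ℤ), 1, le_refl 1, ?_, rfl⟩⟩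
    have : ((1:ℕ) : A) * f - ((-(cf:ℤ) : ℤ) : A) * u = (cf : A) * u + f := by push_cast; ring
    rw [this]; exact hcf2
  have hQub : ∀ r ∈ Q, r ≤ 1 := by
    rintro r ⟨m, n, hn, hmem, rfl⟩
    have h1 : (n : A) * (u - f) ∈ Ms := hMnat n _ hufM
    have h2 : (n : A) * f - (m : A) * u + (n : A) * (u - f) = ((n - m : ℤ) : A) * u := by
      push_cast; ring
    have h3 : ((n - m : ℤ) : A) * u ∈ Ms := by rw [← h2]; exact hMadd _ hmem _ h1
    have h4 : (0:ℤ) ≤ n - m := hstar _ h3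
    have hn' : (0:ℝ) < (n:ℝ) := by exact_mod_cast Nat.pos_of_ne_zero (by omega)
    rw [div_le_one hn']
    have : (m:ℤ) ≤ (n:ℤ) := by omega
    exact_mod_cast this
  have hQbdd : BddAbove Q := ⟨1, fun r hr => hQub r hr⟩
  set qv : ℝ := sSup Q with hqv
  have hqv_le0 : qv ≤ 0 := by
    apply csSup_le hQne
    rintro r ⟨m, n, hn, hmem, rfl⟩
    have hm0 : m ≤ 0 := by
      by_contra hm
      push_neg at hm
      have h1 : ((m - 1 : ℤ) : A) * u ∈ Ms := hMint _ (by omega) u huM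
      have h2 : (n : A) * f - (m : A) * u + ((m - 1 : ℤ) : A) * u = (n : A) * f - u := by
        push_cast; ring
      exact hA n hn (by rw [← h2]; exact hMadd _ hmem _ h1)
    have hn' : (0:ℝ) < (n:ℝ) := by exact_mod_cast Nat.pos_of_ne_zero (by omega)
    apply div_nonpos_of_nonpos_of_nonneg
    · exact_mod_cast hm0
    · exact le_of_lt hn'
  -- partial functionals as subsets of A × ℝ
  set P : Set (A × ℝ) → Prop := fun Γ =>
    (∀ p ∈ Γ, p.1 ∈ Gs) ∧ (∀ p ∈ Γ, ∀ q ∈ Γ, p + q ∈ Γ) ∧ (∀ p ∈ Γ, -p ∈ Γ) ∧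
    ((u, (1:ℝ)) ∈ Γ) ∧ ((f, qv) ∈ Γ) ∧ (∀ p ∈ Γ, p.1 ∈ Ms → 0 ≤ p.2) with hPdef
  -- the initial partial functional
  set Γ₀ : Set (A × ℝ) := {p | ∃ a b : ℤ, p = ((a : A) * u + (b : A) * f, (a : ℝ) + (b : ℝ) * qv)}
    with hΓ₀def
  have hΓ₀P : P Γ₀ := by
    refine ⟨?_, ?_, ?_, ?_, ?_, ?_⟩
    · rintro p ⟨a, b, rfl⟩
      exact hGadd _ (lgc_G_int hG0 hGadd hGneg a u huG) _ (lgc_G_int hG0 hGadd hGneg b f hfG)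
    · rintro p ⟨a, b, rfl⟩ q ⟨a', b', rfl⟩
      exact ⟨a + a', b + b', by simp [Prod.ext_iff]; constructor <;> push_cast <;> ring⟩
    · rintro p ⟨a, b, rfl⟩
      exact ⟨-a, -b, by simp [Prod.ext_iff]; constructor <;> push_cast <;> ring⟩
    · exact ⟨1, 0, by norm_num⟩
    · exact ⟨0, 1, by norm_num⟩
    · rintro p ⟨a, b, rfl⟩ hmem
      simp only at hmem ⊢
      rcases lt_trichotomy b 0 with hb | hb | hb
      · -- b < 0 : qv ≤ a / (-b)
        have hkey : qv ≤ (a : ℝ) / ((-b : ℤ) : ℝ) := by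
          apply csSup_le hQne
          rintro r ⟨m, n, hn, hmem', rfl⟩
          have c1 : ((-b).toNat : A) * ((n : A) * f - (m : A) * u) ∈ Ms :=
            hMnat _ _ hmem'
          have c2 : (n : A) * ((a : A) * u + (b : A) * f) ∈ Ms := hMnat _ _ hmem
          have c3 : ((-b).toNat : A) = ((-b : ℤ) : A) := hcast _ (by omega)
          have c4 : ((-b).toNat : A) * ((n : A) * f - (m : A) * u)
              + (n : A) * ((a : A) * u + (b : A) * f)
              = (((n : ℤ) * a + b * m : ℤ) : A) * u := by
            rw [c3]; push_cast; ring
          have c5 : (0:ℤ) ≤ (n : ℤ) * a + b * m := by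
            apply hstar; rw [← c4]; exact hMadd _ c1 _ c2
          -- m / n ≤ a / (-b)
          have hn' : (0:ℝ) < (n:ℝ) := by exact_mod_cast Nat.pos_of_ne_zero (by omega)
          have hb' : (0:ℝ) < ((-b : ℤ) : ℝ) := by exact_mod_cast (by omega : (0:ℤ) < -b)
          rw [div_le_div_iff₀ hn' hb']
          have : (m : ℤ) * (-b) ≤ a * n := by nlinarith
          exact_mod_cast this
        have hb' : (0:ℝ) < ((-b : ℤ) : ℝ) := by exact_mod_cast (by omega : (0:ℤ) < -b)
        have h5 : ((b:ℝ)) * qv ≥ (b:ℝ) * ((a : ℝ) / ((-b : ℤ) : ℝ)) := by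
          apply mul_le_mul_of_nonpos_left hkey
          exact_mod_cast (by omega : (b:ℤ) ≤ 0)
        have hbne : (b:ℝ) ≠ 0 := by exact_mod_cast (by omega : (b:ℤ) ≠ 0)
        have h6 : (b:ℝ) * ((a : ℝ) / ((-b : ℤ) : ℝ)) = -(a:ℝ) := by
          push_cast
          field_simp [hbne]
          try ring
        linarith
      · -- b = 0
        subst hb
        have : ((a : ℤ) : A) * u ∈ Ms := by simpa using hmem
        have := hstar _ this
        simp only [Int.cast_zero, zero_mul, add_zero]
        exact_mod_cast this
      · -- b > 0 : (-a)/b is a lower ratio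
        have hmem' : ((b.toNat : ℕ) : A) * f - ((-a : ℤ) : A) * u ∈ Ms := by
          have c3 : ((b.toNat : ℕ) : A) = ((b : ℤ) : A) := hcast _ (by omega)
          rw [c3]
          have : ((b : ℤ) : A) * f - ((-a : ℤ) : A) * u = (a : A) * u + (b : A) * f := by
            push_cast; ring
          rw [this]; exact hmem
        have hQm : ((-a : ℤ) : ℝ) / ((b.toNat : ℕ) : ℝ) ∈ Q :=
          ⟨-a, b.toNat, by omega, hmem', rfl⟩
        have h7 : ((-a : ℤ) : ℝ) / ((b.toNat : ℕ) : ℝ) ≤ qv := le_csSup hQbdd hQm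
        have hb' : (0:ℝ) < ((b.toNat : ℕ) : ℝ) := by
          exact_mod_cast (by omega : (0:ℤ) < (b.toNat : ℤ))
        have hbeq : ((b.toNat : ℕ) : ℝ) = (b : ℝ) := by exact_mod_cast (by omega : ((b.toNat:ℤ)) = b)
        rw [div_le_iff₀ hb', hbeq] at h7
        push_cast at h7 ⊢
        nlinarith
  -- Zorn
  obtain ⟨Γ, hΓ₀Γ, hΓmax⟩ := zorn_subset_nonempty {Γ | P Γ} (by
    intro c hc hchain hcne
    refine ⟨⋃₀ c, ⟨?_, ?_, ?_, ?_, ?_, ?_⟩, fun s hs => Set.subset_sUnion_of_mem hs⟩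
    · rintro p ⟨t, ht, hp⟩
      exact (hc ht).1 p hp
    · rintro p ⟨t, ht, hp⟩ q ⟨t', ht', hq⟩
      rcases hchain.total ht ht' with h | h
      · exact ⟨t', ht', (hc ht').2.1 p (h hp) q hq⟩
      · exact ⟨t, ht, (hc ht).2.1 p hp q (h hq)⟩
    · rintro p ⟨t, ht, hp⟩
      exact ⟨t, ht, (hc ht).2.2.1 p hp⟩
    · obtain ⟨t, ht⟩ := hcne
      exact ⟨t, ht, (hc ht).2.2.2.1⟩
    · obtain ⟨t, ht⟩ := hcne
      exact ⟨t, ht, (hc ht).2.2.2.2.1⟩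
    · rintro p ⟨t, ht, hp⟩
      exact (hc ht).2.2.2.2.2 p hp) Γ₀ hΓ₀P
  obtain ⟨hΓG, hΓadd, hΓneg, hΓu, hΓf, hΓpos⟩ := hΓmax.prop
  -- basic closure facts about Γ
  have hΓ0 : ((0:A), (0:ℝ)) ∈ Γ := by
    have := hΓadd _ hΓu _ (hΓneg _ hΓu)
    simpa using this
  have hΓnat : ∀ (n : ℕ), ∀ p ∈ Γ, (((n : A) * p.1, (n : ℝ) * p.2) : A × ℝ) ∈ Γ := by
    intro n p hp
    induction n with
    | zero => simpa using hΓ0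
    | succ n ih =>
        have := hΓadd _ ih _ hp
        have he : (((n:A) * p.1, (n:ℝ) * p.2) : A × ℝ) + p
            = (((n+1 : ℕ) : A) * p.1, ((n+1 : ℕ) : ℝ) * p.2) := by
          simp [Prod.ext_iff]; constructor <;> push_cast <;> ring
        rwa [he] at this
  have hΓint : ∀ (k : ℤ), ∀ p ∈ Γ, (((k : A) * p.1, (k : ℝ) * p.2) : A × ℝ) ∈ Γ := by
    intro k p hp
    rcases le_or_gt 0 k with hk | hk
    · have := hΓnat k.toNat p hp
      have e1 : ((k.toNat : ℕ) : A) = (k : A) := by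
        rw [← Int.cast_natCast]; congr 1; omega
      have e2 : ((k.toNat : ℕ) : ℝ) = (k : ℝ) := by
        rw [← Int.cast_natCast]; congr 1; omega
      rwa [e1, e2] at this
    · have h1 := hΓnat (-k).toNat p hp
      have h2 := hΓneg _ h1
      have e1 : (((-k).toNat : ℕ) : A) = ((-k : ℤ) : A) := by
        rw [← Int.cast_natCast]; congr 1; omega
      have e2 : (((-k).toNat : ℕ) : ℝ) = ((-k : ℤ) : ℝ) := by
        rw [← Int.cast_natCast]; congr 1; omega
      have he : -((((-k).toNat : ℕ) : A) * p.1, (((-k).toNat : ℕ) : ℝ) * p.2)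
          = (((k : A) * p.1, (k : ℝ) * p.2) : A × ℝ) := by
        rw [e1, e2]
        simp only [Prod.neg_mk, Prod.mk.injEq]
        constructor <;> (push_cast; ring)
      rwa [he] at h2
  -- functionality
  have hfun : ∀ x r r', (x, r) ∈ Γ → (x, r') ∈ Γ → r = r' := by
    intro x r r' h1 h2
    have h3 := hΓadd _ h1 _ (hΓneg _ h2)
    have he : ((x, r) : A × ℝ) + -(x, r') = ((0 : A), r - r') := by
      simp [Prod.ext_iff]; ring
    rw [he] at h3
    have p1 := hΓpos _ h3 (by simpa using hM0)
    have h4 := hΓadd _ h2 _ (hΓneg _ h1)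
    have he' : ((x, r') : A × ℝ) + -(x, r) = ((0 : A), r' - r) := by
      simp [Prod.ext_iff]; ring
    rw [he'] at h4
    have p2 := hΓpos _ h4 (by simpa using hM0)
    simp only at p1 p2
    linarith
  -- totality on Gs
  have htot : ∀ x ∈ Gs, ∃ r, (x, r) ∈ Γ := by
    intro x₀ hx₀
    by_contra hno
    push_neg at hno
    -- lower and upper ratio sets
    set LB : Set ℝ := {r | ∃ p ∈ Γ, ∃ n : ℕ, 1 ≤ n ∧ (n : A) * x₀ - p.1 ∈ Ms ∧
      r = p.2 / (n : ℝ)} with hLBdef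
    set UB : Set ℝ := {r | ∃ p ∈ Γ, ∃ n : ℕ, 1 ≤ n ∧ p.1 - (n : A) * x₀ ∈ Ms ∧
      r = p.2 / (n : ℝ)} with hUBdef
    obtain ⟨c, hc1, hc2⟩ := hbound x₀ hx₀
    have hLBne : LB.Nonempty := by
      have hp : (((-(c:ℤ) : ℤ) : A) * u, ((-(c:ℤ) : ℤ) : ℝ) * 1) ∈ Γ := hΓint _ _ hΓu
      refine ⟨((-(c:ℤ) : ℤ) : ℝ) * 1 / ((1:ℕ) : ℝ), ⟨_, hp, 1, le_refl 1, ?_, rfl⟩⟩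
      have : ((1:ℕ) : A) * x₀ - ((-(c:ℤ) : ℤ) : A) * u = (c : A) * u + x₀ := by push_cast; ring
      rw [this]; exact hc2
    have hUBne : UB.Nonempty := by
      have hp : (((c : ℕ) : A) * u, ((c : ℕ) : ℝ) * 1) ∈ Γ := hΓnat _ _ hΓu
      refine ⟨((c:ℕ) : ℝ) * 1 / ((1:ℕ) : ℝ), ⟨_, hp, 1, le_refl 1, ?_, rfl⟩⟩
      have : ((c:ℕ) : A) * u - ((1:ℕ) : A) * x₀ = (c : A) * u - x₀ := by push_cast; ring
      rw [this]; exact hc1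
    have hLU : ∀ l ∈ LB, ∀ r ∈ UB, l ≤ r := by
      rintro l ⟨p, hp, n, hn, hpm, rfl⟩ r ⟨p', hp', n', hn', hpm', rfl⟩
      have c1 := hΓnat n p' hp'
      have c2 := hΓneg _ (hΓnat n' p hp)
      have c3 := hΓadd _ c1 _ c2
      have hmm : ((n:A) * p'.1 + -((n':A) * p.1)) ∈ Ms := by
        have e : (n:A) * p'.1 + -((n':A) * p.1)
            = (n:A) * (p'.1 - (n' : A) * x₀) + (n':A) * ((n : A) * x₀ - p.1) := by ring
        rw [e]
        exact hMadd _ (hMnat _ _ hpm') _ (hMnat _ _ hpm)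
      have hpos := hΓpos _ c3 hmm
      simp only [Prod.snd_add, Prod.snd_neg] at hpos
      have hn0 : (0:ℝ) < (n:ℝ) := by exact_mod_cast Nat.pos_of_ne_zero (by omega)
      have hn'0 : (0:ℝ) < (n':ℝ) := by exact_mod_cast Nat.pos_of_ne_zero (by omega)
      rw [div_le_div_iff₀ hn0 hn'0]
      nlinarith
    have hLBbdd : BddAbove LB := by
      obtain ⟨r, hr⟩ := hUBne
      exact ⟨r, fun l hl => hLU l hl r hr⟩
    set r₀ : ℝ := sSup LB with hr₀
    have hr₀ge : ∀ l ∈ LB, l ≤ r₀ := fun l hl => le_csSup hLBbdd hl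
    have hr₀le : ∀ r ∈ UB, r₀ ≤ r := fun r hr => csSup_le hLBne (fun l hl => hLU l hl r hr)
    -- the extension
    set Γ' : Set (A × ℝ) := {p' | ∃ p ∈ Γ, ∃ k : ℤ, p' = p + ((k : A) * x₀, (k : ℝ) * r₀)}
      with hΓ'def
    have hΓ'P : P Γ' := by
      refine ⟨?_, ?_, ?_, ?_, ?_, ?_⟩
      · rintro p' ⟨p, hp, k, rfl⟩
        exact hGadd _ (hΓG p hp) _ (lgc_G_int hG0 hGadd hGneg k x₀ hx₀)
      · rintro p' ⟨p, hp, k, rfl⟩ q' ⟨q, hq, k', rfl⟩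
        refine ⟨p + q, hΓadd _ hp _ hq, k + k', ?_⟩
        obtain ⟨p1, p2⟩ := p; obtain ⟨q1, q2⟩ := q
        simp only [Prod.mk_add_mk, Prod.mk.injEq]
        constructor <;> (push_cast; ring)
      · rintro p' ⟨p, hp, k, rfl⟩
        refine ⟨-p, hΓneg _ hp, -k, ?_⟩
        obtain ⟨p1, p2⟩ := p
        simp only [Prod.neg_mk, Prod.mk_add_mk, Prod.mk.injEq]
        constructor <;> (push_cast; ring)
      · exact ⟨(u, 1), hΓu, 0, by simp⟩
      · exact ⟨(f, qv), hΓf, 0, by simp⟩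
      · rintro p' ⟨p, hp, k, rfl⟩ hmem
        simp only [Prod.fst_add, Prod.snd_add] at hmem ⊢
        rcases lt_trichotomy k 0 with hk | hk | hk
        · -- k < 0 : use UB
          have e1 : (((-k).toNat : ℕ) : A) = ((-k : ℤ) : A) := by
            rw [← Int.cast_natCast]; congr 1; omega
          have hmem' : p.1 - (((-k).toNat : ℕ) : A) * x₀ ∈ Ms := by
            rw [e1]
            have : p.1 - ((-k : ℤ) : A) * x₀ = p.1 + (k : A) * x₀ := by push_cast; ring
            rw [this]; exact hmem
          have hUBmem : p.2 / (((-k).toNat : ℕ) : ℝ) ∈ UB :=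
            ⟨p, hp, (-k).toNat, by omega, hmem', rfl⟩
          have := hr₀le _ hUBmem
          have hk0 : (0:ℝ) < (((-k).toNat : ℕ) : ℝ) := by
            exact_mod_cast (by omega : (0:ℤ) < ((-k).toNat : ℤ))
          rw [le_div_iff₀ hk0] at this
          have e2 : (((-k).toNat : ℕ) : ℝ) = ((-k : ℤ) : ℝ) := by
            rw [← Int.cast_natCast]; congr 1; omega
          rw [e2] at this
          push_cast at this ⊢
          nlinarith
        · subst hk
          simp only [Int.cast_zero, zero_mul, add_zero] at hmem ⊢
          exact hΓpos p hp hmem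
        · -- k > 0 : use LB with -p
          have e1 : ((k.toNat : ℕ) : A) = ((k : ℤ) : A) := by
            rw [← Int.cast_natCast]; congr 1; omega
          have hmem' : ((k.toNat : ℕ) : A) * x₀ - (-p).1 ∈ Ms := by
            rw [e1]
            have : ((k : ℤ) : A) * x₀ - (-p).1 = p.1 + (k : A) * x₀ := by
              simp only [Prod.fst_neg]; push_cast; ring
            rw [this]; exact hmem
          have hLBmem : (-p).2 / ((k.toNat : ℕ) : ℝ) ∈ LB :=
            ⟨-p, hΓneg _ hp, k.toNat, by omega, hmem', rfl⟩
          have := hr₀ge _ hLBmem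
          have hk0 : (0:ℝ) < ((k.toNat : ℕ) : ℝ) := by
            exact_mod_cast (by omega : (0:ℤ) < (k.toNat : ℤ))
          rw [div_le_iff₀ hk0] at this
          have e2 : ((k.toNat : ℕ) : ℝ) = ((k : ℤ) : ℝ) := by
            rw [← Int.cast_natCast]; congr 1; omega
          rw [e2] at this
          simp only [Prod.fst_neg, Prod.snd_neg] at this
          push_cast at this ⊢
          nlinarith
    have hsub : Γ ⊆ Γ' := by
      intro p hp
      exact ⟨p, hp, 0, by simp⟩
    have : Γ' ⊆ Γ := hΓmax.2 hΓ'P hsub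
    have hx₀Γ : (x₀, r₀) ∈ Γ := by
      apply this
      refine ⟨((0:A), (0:ℝ)), hΓ0, 1, by simp⟩
    exact hno r₀ hx₀Γ
  -- extract the functional
  set φ : A → ℝ := fun x => if h : ∃ r, (x, r) ∈ Γ then h.choose else 0 with hφdef
  have hφspec : ∀ x r, (x, r) ∈ Γ → φ x = r := by
    intro x r hr
    have h : ∃ r, (x, r) ∈ Γ := ⟨r, hr⟩
    simp only [hφdef, dif_pos h]
    exact hfun x _ r h.choose_spec hr
  have hdomG : ∀ x, (∃ r, (x, r) ∈ Γ) → x ∈ Gs := by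
    rintro x ⟨r, hr⟩
    exact hΓG _ hr
  refine ⟨φ, ?_, ?_, ?_, ?_, ?_⟩
  · intro x hx y hy
    obtain ⟨r, hr⟩ := htot x hx
    obtain ⟨r', hr'⟩ := htot y hy
    have := hΓadd _ hr _ hr'
    have he : ((x, r) : A × ℝ) + (y, r') = (x + y, r + r') := rfl
    rw [he] at this
    rw [hφspec _ _ this, hφspec _ _ hr, hφspec _ _ hr']
  · intro x hx hm
    obtain ⟨r, hr⟩ := htot x hx
    rw [hφspec _ _ hr]
    exact hΓpos _ hr hm
  · exact hφspec _ _ hΓu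
  · intro x hx
    simp only [hφdef]
    rw [dif_neg]
    intro hcon
    exact hx (hdomG x hcon)
  · rw [hφspec _ _ hΓf]
    exact hqv_le0

private theorem lgc_phi_neg {A : Type*} [CommRing A] {Gs : Set A} {φ : A → ℝ}
    (hG0 : (0:A) ∈ Gs) (hGneg : ∀ x ∈ Gs, -x ∈ Gs)
    (hadd : ∀ x ∈ Gs, ∀ y ∈ Gs, φ (x + y) = φ x + φ y) :
    φ 0 = 0 ∧ ∀ x ∈ Gs, φ (-x) = -φ x := by
  have h0 : φ 0 = 0 := by
    have := hadd 0 hG0 0 hG0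
    simp at this
    linarith
  refine ⟨h0, fun x hx => ?_⟩
  have := hadd x hx (-x) (hGneg x hx)
  simp [h0] at this
  linarith

private theorem lgc_phi_nat {A : Type*} [CommRing A] {Gs : Set A} {φ : A → ℝ}
    (hG0 : (0:A) ∈ Gs) (hGadd : ∀ x ∈ Gs, ∀ y ∈ Gs, x + y ∈ Gs)
    (hadd : ∀ x ∈ Gs, ∀ y ∈ Gs, φ (x + y) = φ x + φ y) :
    ∀ (n : ℕ), ∀ x ∈ Gs, φ ((n : A) * x) = n * φ x := by
  intro n x hx
  induction n with
  | zero =>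
      have h0 : φ 0 = 0 := by
        have := hadd 0 hG0 0 hG0
        simp at this
        linarith
      simpa using h0
  | succ n ih =>
      have e : ((n + 1 : ℕ) : A) * x = (n : A) * x + x := by push_cast; ring
      rw [e, hadd _ (lgc_G_nat hG0 hGadd n x hx) _ hx, ih]
      push_cast
      ring

theorem lgc_pure_state {A : Type*} [CommRing A] (Gs Ms : Set A) (u f : A)
    (hG0 : (0:A) ∈ Gs) (hGadd : ∀ x ∈ Gs, ∀ y ∈ Gs, x + y ∈ Gs)
    (hGneg : ∀ x ∈ Gs, -x ∈ Gs) (huG : u ∈ Gs)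
    (hbound : ∀ x ∈ Gs, ∃ c : ℕ, (c : A) * u - x ∈ Ms ∧ (c : A) * u + x ∈ Ms)
    (hstate : ∃ φ ∈ lgcStates Gs Ms u, φ f ≤ 0) :
    ∃ φ ∈ lgcStates Gs Ms u, φ f ≤ 0 ∧ ∀ ψ₁ ∈ lgcStates Gs Ms u, ∀ ψ₂ ∈ lgcStates Gs Ms u,
      φ ∈ openSegment ℝ ψ₁ ψ₂ → ψ₁ = φ ∧ ψ₂ = φ := by
  classical
  set SS := lgcStates Gs Ms u with hSSdef
  -- membership in M∩Gs requires Gs-membership for positivity; derive bounds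
  have hbd : ∀ φ ∈ SS, ∀ x ∈ Gs, ∀ c : ℕ,
      ((c : A) * u - x ∈ Ms) → ((c : A) * u + x ∈ Ms) → |φ x| ≤ c := by
    rintro φ ⟨hadd, hpos, hu1, hout⟩ x hx c hc1 hc2
    have hneg := (lgc_phi_neg hG0 hGneg hadd).2
    have hnat := lgc_phi_nat hG0 hGadd hadd
    have hcu : (c : A) * u ∈ Gs := lgc_G_nat hG0 hGadd c u huG
    have h1 : φ ((c : A) * u + (-x)) = c * φ u + φ (-x) := by
      rw [hadd _ hcu _ (hGneg x hx), hnat c u huG]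
    have h2 : φ ((c : A) * u + x) = c * φ u + φ x := by
      rw [hadd _ hcu _ hx, hnat c u huG]
    have p1 : 0 ≤ φ ((c : A) * u + (-x)) := by
      apply hpos _ (hGadd _ hcu _ (hGneg x hx))
      rwa [show (c : A) * u + (-x) = (c : A) * u - x by ring]
    have p2 : 0 ≤ φ ((c : A) * u + x) := hpos _ (hGadd _ hcu _ hx) hc2
    rw [h1, hu1, hneg x hx] at p1
    rw [h2, hu1] at p2
    rw [abs_le]
    constructor <;> linarith
  set cb : A → ℝ := fun x => if h : x ∈ Gs then ((hbound x h).choose : ℝ) else 0 with hcbdef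
  have hSSsub : SS ⊆ Set.pi Set.univ fun x => Set.Icc (-(cb x)) (cb x) := by
    intro φ hφ
    rw [Set.mem_univ_pi]
    intro x
    by_cases hx : x ∈ Gs
    · have hc := (hbound x hx).choose_spec
      have := hbd φ hφ x hx _ hc.1 hc.2
      rw [abs_le] at this
      simp only [hcbdef, dif_pos hx]
      exact ⟨this.1, this.2⟩
    · obtain ⟨hadd, hpos, hu1, hout⟩ := hφ
      have hcb0 : cb x = 0 := by simp only [hcbdef, dif_neg hx]
      rw [Set.mem_Icc, hout x hx, hcb0]
      norm_num
  have hKcomp : IsCompact (Set.pi Set.univ fun x : A => Set.Icc (-(cb x)) (cb x)) :=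
    isCompact_univ_pi fun x => isCompact_Icc
  have hSSclosed : IsClosed SS := by
    have h1 : IsClosed {φ : A → ℝ | ∀ x ∈ Gs, ∀ y ∈ Gs, φ (x + y) = φ x + φ y} := by
      have he : {φ : A → ℝ | ∀ x ∈ Gs, ∀ y ∈ Gs, φ (x + y) = φ x + φ y}
          = ⋂ (x ∈ Gs), ⋂ (y ∈ Gs), {φ : A → ℝ | φ (x + y) = φ x + φ y} := by
        ext φ; simp
      rw [he]
      exact isClosed_biInter fun x hx => isClosed_biInter fun y hy =>
        isClosed_eq (continuous_apply (x + y)) ((continuous_apply x).add (continuous_apply y))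
    have h2 : IsClosed {φ : A → ℝ | ∀ x ∈ Gs, x ∈ Ms → 0 ≤ φ x} := by
      have he : {φ : A → ℝ | ∀ x ∈ Gs, x ∈ Ms → 0 ≤ φ x}
          = ⋂ (x ∈ Gs), ⋂ (_ : x ∈ Ms), {φ : A → ℝ | 0 ≤ φ x} := by
        ext φ; simp
      rw [he]
      exact isClosed_biInter fun x hx => isClosed_iInter fun _ =>
        isClosed_le continuous_const (continuous_apply x)
    have h3 : IsClosed {φ : A → ℝ | φ u = 1} :=
      isClosed_eq (continuous_apply _) continuous_const
    have h4 : IsClosed {φ : A → ℝ | ∀ x, x ∉ Gs → φ x = 0} := by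
      have he : {φ : A → ℝ | ∀ x, x ∉ Gs → φ x = 0}
          = ⋂ (x ∈ Gsᶜ), {φ : A → ℝ | φ x = 0} := by
        ext φ; simp
      rw [he]
      exact isClosed_biInter fun x hx =>
        isClosed_eq (continuous_apply _) continuous_const
    have he : SS = {φ : A → ℝ | ∀ x ∈ Gs, ∀ y ∈ Gs, φ (x + y) = φ x + φ y}
        ∩ ({φ : A → ℝ | ∀ x ∈ Gs, x ∈ Ms → 0 ≤ φ x}
        ∩ ({φ : A → ℝ | φ u = 1} ∩ {φ : A → ℝ | ∀ x, x ∉ Gs → φ x = 0})) := by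
      ext φ
      simp only [hSSdef, lgcStates, Set.mem_setOf_eq, Set.mem_inter_iff]
      try tauto
    rw [he]
    exact h1.inter (h2.inter (h3.inter h4))
  have hSScomp : IsCompact SS := hKcomp.of_isClosed_subset hSSclosed hSSsub
  obtain ⟨φ₀, hφ₀SS, hφ₀f⟩ := hstate
  obtain ⟨φ₁, hφ₁SS, hφ₁min⟩ :=
    hSScomp.exists_isMinOn ⟨φ₀, hφ₀SS⟩ ((continuous_apply f).continuousOn)
  have hmin : ∀ ψ ∈ SS, φ₁ f ≤ ψ f := fun ψ hψ => hφ₁min hψ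
  set F : Set (A → ℝ) := SS ∩ {ψ | ψ f = φ₁ f} with hFdef
  have hFcomp : IsCompact F :=
    hSScomp.inter_right (isClosed_eq (continuous_apply _) continuous_const)
  have hFne : F.Nonempty := ⟨φ₁, hφ₁SS, rfl⟩
  obtain ⟨φ, hφext⟩ := hFcomp.extremePoints_nonempty hFne
  rw [mem_extremePoints] at hφext
  obtain ⟨⟨hφSS, hφf⟩, hφpure⟩ := hφext
  refine ⟨φ, hφSS, ?_, ?_⟩
  · rw [Set.mem_setOf_eq] at hφf
    rw [hφf]
    exact le_trans (hmin φ₀ hφ₀SS) hφ₀f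
  · intro ψ₁ h₁ ψ₂ h₂ hseg
    obtain ⟨a, b, ha, hb, hab, heq⟩ := hseg
    have heval : a * ψ₁ f + b * ψ₂ f = φ f := by
      have := congrFun heq f
      simpa using this
    rw [Set.mem_setOf_eq] at hφf
    have k1 : a * φ₁ f ≤ a * ψ₁ f := mul_le_mul_of_nonneg_left (hmin ψ₁ h₁) ha.le
    have k2 : b * φ₁ f ≤ b * ψ₂ f := mul_le_mul_of_nonneg_left (hmin ψ₂ h₂) hb.le
    have hs : a * φ₁ f + b * φ₁ f = φ₁ f := by rw [← add_mul, hab, one_mul]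
    have e1 : ψ₁ f = φ₁ f := by
      have h' : a * ψ₁ f = a * φ₁ f := by linarith
      exact mul_left_cancel₀ (ne_of_gt ha) h'
    have e2 : ψ₂ f = φ₁ f := by
      have h' : b * ψ₂ f = b * φ₁ f := by linarith
      exact mul_left_cancel₀ (ne_of_gt hb) h' 
    exact hφpure ψ₁ ⟨h₁, e1⟩ ψ₂ ⟨h₂, e2⟩ ⟨a, b, ha, hb, hab, heq⟩

/-- Local–global criterion: let `S` be an archimedean subsemiring of `A` and `M` an
`S`-module. If `f ∈ A` is such that for every maximal ideal `𝔪` of `A` there exists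
`s ∈ S` with `s ∉ 𝔪` and `sf ∈ M`, then `nf ∈ M` for some `n ∈ ℕ`. -/
theorem local_global_criterion {A : Type*} [CommRing A] (S M : Set A)
    (hS0 : (0 : A) ∈ S) (hS1 : (1 : A) ∈ S)
    (hSadd : ∀ x ∈ S, ∀ y ∈ S, x + y ∈ S)
    (hSmul : ∀ x ∈ S, ∀ y ∈ S, x * y ∈ S)
    (harch : ∀ a : A, ∃ n : ℕ, (n : A) - a ∈ S)
    (hM0 : (0 : A) ∈ M) (hM1 : (1 : A) ∈ M)
    (hMadd : ∀ x ∈ M, ∀ y ∈ M, x + y ∈ M)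
    (hSM : ∀ s ∈ S, ∀ m ∈ M, s * m ∈ M)
    (f : A)
    (hloc : ∀ 𝔪 : Ideal A, 𝔪.IsMaximal → ∃ s ∈ S, s ∉ 𝔪 ∧ s * f ∈ M) :
    ∃ n : ℕ, 0 < n ∧ n • f ∈ M := by
  classical
  have hSnat : ∀ n : ℕ, ((n : ℕ) : A) ∈ S := by
    intro n
    induction n with
    | zero => simpa using hS0
    | succ n ih =>
        have e : ((n + 1 : ℕ) : A) = (n : A) + 1 := by push_cast; ring
        rw [e]; exact hSadd _ ih _ hS1
  have hMnat : ∀ (n : ℕ), ∀ x ∈ M, (n : A) * x ∈ M := fun n x hx => hSM _ (hSnat n) _ hx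
  -- W = {s ∈ S : s f ∈ M}
  set W : Set A := {w | w ∈ S ∧ w * f ∈ M} with hWdef
  have hW0 : (0 : A) ∈ W := ⟨hS0, by simpa using hM0⟩
  have hWadd : ∀ w ∈ W, ∀ w' ∈ W, w + w' ∈ W := by
    rintro w ⟨hwS, hwM⟩ w' ⟨hw'S, hw'M⟩
    exact ⟨hSadd _ hwS _ hw'S, by rw [add_mul]; exact hMadd _ hwM _ hw'M⟩
  have hWsmul : ∀ s ∈ S, ∀ w ∈ W, s * w ∈ W := by
    rintro s hs w ⟨hwS, hwM⟩
    exact ⟨hSmul _ hs _ hwS, by rw [mul_assoc]; exact hSM _ hs _ hwM⟩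
  -- the ideal W - W is all of A
  let J : Ideal A :=
    { carrier := {a | ∃ w₁ ∈ W, ∃ w₂ ∈ W, a = w₁ - w₂}
      add_mem' := by
        rintro a b ⟨w₁, hw₁, w₂, hw₂, rfl⟩ ⟨v₁, hv₁, v₂, hv₂, rfl⟩
        exact ⟨w₁ + v₁, hWadd _ hw₁ _ hv₁, w₂ + v₂, hWadd _ hw₂ _ hv₂, by ring⟩
      zero_mem' := ⟨0, hW0, 0, hW0, by ring⟩
      smul_mem' := by
        rintro c a ⟨w₁, hw₁, w₂, hw₂, rfl⟩
        obtain ⟨n, hn⟩ := harch c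
        refine ⟨(n : A) * w₁ + ((n : A) - c) * w₂,
          hWadd _ (hWsmul _ (hSnat n) _ hw₁) _ (hWsmul _ hn _ hw₂),
          (n : A) * w₂ + ((n : A) - c) * w₁,
          hWadd _ (hWsmul _ (hSnat n) _ hw₂) _ (hWsmul _ hn _ hw₁), ?_⟩
        simp only [smul_eq_mul]
        ring }
  have hJtop : (1 : A) ∈ J := by
    by_cases hne : J = ⊤
    · rw [hne]; exact Submodule.mem_top
    · exfalso
      obtain ⟨𝔪, hmax, hle⟩ := Ideal.exists_le_maximal J hne
      obtain ⟨s, hsS, hsnm, hsf⟩ := hloc 𝔪 hmax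
      exact hsnm (hle ⟨s, ⟨hsS, hsf⟩, 0, hW0, by ring⟩)
  obtain ⟨w₁, hw₁, z, hz, h1eq⟩ := hJtop
  have h1zW : (1 + z) ∈ W := by
    have : w₁ = 1 + z := by rw [h1eq]; ring
    rwa [← this]
  -- the order unit u and the group Gs
  set u : A := (1 + z) * f with hudef
  have huM : u ∈ M := h1zW.2
  have hzfM : z * f ∈ M := hz.2
  set Gs : Set A := {x | ∃ w ∈ W, ∃ w' ∈ W, x = w * f - w' * f} with hGdef
  have hG0 : (0 : A) ∈ Gs := ⟨0, hW0, 0, hW0, by ring⟩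
  have hGadd : ∀ x ∈ Gs, ∀ y ∈ Gs, x + y ∈ Gs := by
    rintro x ⟨w, hw, w', hw', rfl⟩ y ⟨v, hv, v', hv', rfl⟩
    exact ⟨w + v, hWadd _ hw _ hv, w' + v', hWadd _ hw' _ hv', by ring⟩
  have hGneg : ∀ x ∈ Gs, -x ∈ Gs := by
    rintro x ⟨w, hw, w', hw', rfl⟩
    exact ⟨w', hw', w, hw, by ring⟩
  have hfG : f ∈ Gs := ⟨1 + z, h1zW, z, hz, by ring⟩
  have huG : u ∈ Gs := ⟨1 + z, h1zW, 0, hW0, by rw [hudef]; ring⟩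
  have hGmulA : ∀ c : A, ∀ x ∈ Gs, c * x ∈ Gs := by
    rintro c x ⟨w, hw, w', hw', rfl⟩
    obtain ⟨n, hn⟩ := harch c
    exact ⟨(n : A) * w + ((n : A) - c) * w',
      hWadd _ (hWsmul _ (hSnat n) _ hw) _ (hWsmul _ hn _ hw'),
      (n : A) * w' + ((n : A) - c) * w,
      hWadd _ (hWsmul _ (hSnat n) _ hw') _ (hWsmul _ hn _ hw), by ring⟩
  have hGsub : ∀ x ∈ Gs, ∀ y ∈ Gs, x - y ∈ Gs := by
    intro x hx y hy
    have e : x - y = x + (-y) := by ring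
    rw [e]; exact hGadd _ hx _ (hGneg _ hy)
  -- key order-unit bound
  have hWbound : ∀ w ∈ W, ∃ c : ℕ, ∃ w' ∈ W, (c : A) * u - w * f = w' * f := by
    intro w hw
    obtain ⟨c, hc⟩ := harch w
    refine ⟨c, w * z + ((c : A) - w) * (1 + z), ?_, ?_⟩
    · apply hWadd
      · have := hWsmul z hz.1 w hw
        rwa [mul_comm] at this
      · exact hWsmul _ hc _ h1zW
    · rw [hudef]; ring
  have hbound : ∀ x ∈ Gs, ∃ c : ℕ, (c : A) * u - x ∈ M ∧ (c : A) * u + x ∈ M := by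
    rintro x ⟨w, hw, w', hw', rfl⟩
    obtain ⟨c₁, v₁, hv₁, he₁⟩ := hWbound w hw
    obtain ⟨c₂, v₂, hv₂, he₂⟩ := hWbound w' hw'
    refine ⟨c₁ + c₂, ?_, ?_⟩
    · have e : ((c₁ + c₂ : ℕ) : A) * u - (w * f - w' * f)
          = ((c₁ : A) * u - w * f) + ((c₂ : A) * u + w' * f) := by push_cast; ring
      rw [e, he₁]
      exact hMadd _ hv₁.2 _ (hMadd _ (hMnat c₂ u huM) _ hw'.2)
    · have e : ((c₁ + c₂ : ℕ) : A) * u + (w * f - w' * f)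
          = ((c₂ : A) * u - w' * f) + ((c₁ : A) * u + w * f) := by push_cast; ring
      rw [e, he₂]
      exact hMadd _ hv₂.2 _ (hMadd _ (hMnat c₁ u huM) _ hw.2)
  -- degenerate case: a negative multiple of u lies in M
  by_cases hdeg : ∃ k : ℤ, (k : A) * u ∈ M ∧ k < 0
  · obtain ⟨k, hkM, hk⟩ := hdeg
    set m : ℕ := (-k).toNat with hmdef
    have hm1 : 1 ≤ m := by omega
    obtain ⟨c, v, hv, he⟩ := hWbound z hz
    have hX₁ : (m : A) * (v * f) ∈ M := hMnat _ _ hv.2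
    have hX₂ : (c : A) * ((k : A) * u) ∈ M := hMnat _ _ hkM
    have hkm : ((k : ℤ) : A) = -((m : ℕ) : A) := by
      have : (k : ℤ) = -(m : ℤ) := by omega
      rw [this]; push_cast; ring
    have key : (m : A) * (v * f) + (c : A) * ((k : A) * u) = -((m : A) * (z * f)) := by
      rw [← he, hkm, hudef]; ring
    have hmzf : -((m : A) * (z * f)) ∈ M := by rw [← key]; exact hMadd _ hX₁ _ hX₂
    have hmf : (m : A) * f ∈ M := by
      have h1 : (m : A) * u ∈ M := hMnat _ _ huM
      have e : (m : A) * u + -((m : A) * (z * f)) = (m : A) * f := by rw [hudef]; ring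
      rw [← e]; exact hMadd _ h1 _ hmzf
    exact ⟨m, by omega, by rw [nsmul_eq_mul]; exact_mod_cast hmf⟩
  have hstar : ∀ k : ℤ, (k : A) * u ∈ M → 0 ≤ k := by
    intro k hk
    by_contra hlt
    push_neg at hlt
    exact hdeg ⟨k, hk, hlt⟩
  -- if nf - u ∈ M for some n we are done
  by_cases hconc : ∃ n : ℕ, 1 ≤ n ∧ (n : A) * f - u ∈ M
  · obtain ⟨n, hn, hnM⟩ := hconc
    have e : (n : A) * f = ((n : A) * f - u) + u := by ring
    exact ⟨n, by omega, by rw [nsmul_eq_mul, e]; exact hMadd _ hnM _ huM⟩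
  exfalso
  have hA : ∀ n : ℕ, 1 ≤ n → ¬((n : A) * f - u ∈ M) := fun n hn hmem => hconc ⟨n, hn, hmem⟩
  have hufM : u - f ∈ M := by
    have e : u - f = z * f := by rw [hudef]; ring
    rw [e]; exact hzfM
  obtain ⟨φZ, hZ1, hZ2, hZ3, hZ4, hZ5⟩ := lgc_state_exists Gs M u f hG0 hGadd hGneg huG hfG
    hM0 hMadd hMnat huM hufM hbound hstar hA
  obtain ⟨φ, hφSS, hφf, hφpure⟩ := lgc_pure_state Gs M u f hG0 hGadd hGneg huG hbound
    ⟨φZ, ⟨hZ1, hZ2, hZ3, hZ4⟩, hZ5⟩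
  obtain ⟨hadd, hpos, hu1, hout⟩ := hφSS
  have hneg := (lgc_phi_neg hG0 hGneg hadd).2
  have hphi0 := (lgc_phi_neg hG0 hGneg hadd).1
  have hnat := lgc_phi_nat hG0 hGadd hadd
  have hsub : ∀ x ∈ Gs, ∀ y ∈ Gs, φ (x - y) = φ x - φ y := by
    intro x hx y hy
    have e : x - y = x + (-y) := by ring
    rw [e, hadd _ hx _ (hGneg _ hy), hneg _ hy]; ring
  -- degenerate multiplicativity
  have hdegmul : ∀ t ∈ S, φ (t * u) = 0 → ∀ x ∈ Gs, φ (t * x) = 0 := by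
    intro t ht htu x hx
    obtain ⟨c, hc1, hc2⟩ := hbound x hx
    have hcuG : (c : A) * u ∈ Gs := lgc_G_nat hG0 hGadd c u huG
    have htuG : t * u ∈ Gs := hGmulA t u huG
    have htxG : t * x ∈ Gs := hGmulA t x hx
    have hctuG : (c : A) * (t * u) ∈ Gs := lgc_G_nat hG0 hGadd c _ htuG
    have g1 : t * ((c : A) * u - x) ∈ Gs := hGmulA t _ (hGsub _ hcuG _ hx)
    have g2 : t * ((c : A) * u + x) ∈ Gs := hGmulA t _ (hGadd _ hcuG _ hx)
    have m1 : t * ((c : A) * u - x) ∈ M := hSM _ ht _ hc1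
    have m2 : t * ((c : A) * u + x) ∈ M := hSM _ ht _ hc2
    have p1 := hpos _ g1 m1
    have p2 := hpos _ g2 m2
    have e1 : t * ((c : A) * u - x) = (c : A) * (t * u) - t * x := by ring
    have e2 : t * ((c : A) * u + x) = (c : A) * (t * u) + t * x := by ring
    rw [e1, hsub _ hctuG _ htxG, hnat c _ htuG, htu] at p1
    rw [e2, hadd _ hctuG _ htxG, hnat c _ htuG, htu] at p2
    simp at p1 p2
    linarith
  -- multiplicativity over S
  have hmulS : ∀ s ∈ S, ∀ x ∈ Gs, φ (s * x) = φ (s * u) * φ x := by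
    intro s hs x hx
    obtain ⟨k₀, hk₀⟩ := harch s
    set k : ℕ := k₀ + 1 with hkdef
    have hkS : ((k : ℕ) : A) - s ∈ S := by
      have e : ((k : ℕ) : A) - s = (((k₀ : ℕ) : A) - s) + 1 := by rw [hkdef]; push_cast; ring
      rw [e]; exact hSadd _ hk₀ _ hS1
    have hsuG : s * u ∈ Gs := hGmulA s u huG
    have hsxG : s * x ∈ Gs := hGmulA s x hx
    have hksuG : ((k : A) - s) * u ∈ Gs := hGmulA _ u huG
    have hksxG : ((k : A) - s) * x ∈ Gs := hGmulA _ x hx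
    have hkuG : (k : A) * u ∈ Gs := lgc_G_nat hG0 hGadd k u huG
    have hkxG : (k : A) * x ∈ Gs := lgc_G_nat hG0 hGadd k x hx
    have hlam0 : 0 ≤ φ (s * u) := hpos _ hsuG (hSM _ hs _ huM)
    have hlamk : φ (s * u) ≤ k := by
      have p1 := hpos _ hksuG (hSM _ hkS _ huM)
      have e : ((k : A) - s) * u = (k : A) * u - s * u := by ring
      rw [e, hsub _ hkuG _ hsuG, hnat k u huG, hu1] at p1
      linarith
    rcases eq_or_lt_of_le hlam0 with hlamz | hlampos
    · rw [hdegmul s hs hlamz.symm x hx, ← hlamz]; ring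
    · rcases eq_or_lt_of_le hlamk with hlamk' | hlamlt
      · -- φ (s u) = k
        have htu : φ (((k : A) - s) * u) = 0 := by
          have e : ((k : A) - s) * u = (k : A) * u - s * u := by ring
          rw [e, hsub _ hkuG _ hsuG, hnat k u huG, hu1, hlamk']
          ring
        have hdx := hdegmul _ hkS htu x hx
        have e2 : φ (s * x) = k * φ x - φ (((k : A) - s) * x) := by
          have e : s * x = (k : A) * x - ((k : A) - s) * x := by ring
          rw [e, hsub _ hkxG _ hksxG, hnat k x hx]
        rw [e2, hdx, hlamk']
        ring
      · -- 0 < φ(su) < k : decomposition using purity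
        have hk0 : (0 : ℝ) < (k : ℝ) := by
          have : (0 : ℕ) < k := by omega
          exact_mod_cast this
        have hlne : φ (s * u) ≠ 0 := ne_of_gt hlampos
        have hklne : (k : ℝ) - φ (s * u) ≠ 0 := ne_of_gt (by linarith)
        set ψ₁ : A → ℝ := fun y => if y ∈ Gs then φ (s * y) / φ (s * u) else 0 with hψ₁def
        set ψ₂ : A → ℝ := fun y =>
          if y ∈ Gs then φ (((k : A) - s) * y) / ((k : ℝ) - φ (s * u)) else 0 with hψ₂def
        have hψ₁SS : ψ₁ ∈ lgcStates Gs M u := by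
          refine ⟨?_, ?_, ?_, ?_⟩
          · intro x' hx' y' hy'
            simp only [hψ₁def, if_pos hx', if_pos hy', if_pos (hGadd _ hx' _ hy')]
            rw [mul_add, hadd _ (hGmulA s x' hx') _ (hGmulA s y' hy')]
            ring
          · intro x' hx' hm
            simp only [hψ₁def, if_pos hx']
            exact div_nonneg (hpos _ (hGmulA s x' hx') (hSM _ hs _ hm)) (le_of_lt hlampos)
          · simp only [hψ₁def, if_pos huG]
            exact div_self hlne
          · intro x' hx'
            simp only [hψ₁def, if_neg hx']
        have hψ₂SS : ψ₂ ∈ lgcStates Gs M u := by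
          refine ⟨?_, ?_, ?_, ?_⟩
          · intro x' hx' y' hy'
            simp only [hψ₂def, if_pos hx', if_pos hy', if_pos (hGadd _ hx' _ hy')]
            rw [mul_add, hadd _ (hGmulA _ x' hx') _ (hGmulA _ y' hy')]
            ring
          · intro x' hx' hm
            simp only [hψ₂def, if_pos hx']
            exact div_nonneg (hpos _ (hGmulA _ x' hx') (hSM _ hkS _ hm)) (by linarith)
          · simp only [hψ₂def, if_pos huG]
            have e : ((k : A) - s) * u = (k : A) * u - s * u := by ring
            rw [e, hsub _ hkuG _ hsuG, hnat k u huG, hu1, mul_one]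
            exact div_self hklne
          · intro x' hx'
            simp only [hψ₂def, if_neg hx']
        have hdecomp : (φ (s * u) / (k : ℝ)) • ψ₁ + (((k : ℝ) - φ (s * u)) / (k : ℝ)) • ψ₂
            = φ := by
          funext y
          by_cases hy : y ∈ Gs
          · simp only [Pi.add_apply, Pi.smul_apply, smul_eq_mul, hψ₁def, hψ₂def, if_pos hy]
            have hsum : φ (s * y) + φ (((k : A) - s) * y) = (k : ℝ) * φ y := by
              rw [← hadd _ (hGmulA s y hy) _ (hGmulA _ y hy)]
              have e : s * y + ((k : A) - s) * y = (k : A) * y := by ring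
              rw [e, hnat k y hy]
            have t1 : φ (s * u) / (k : ℝ) * (φ (s * y) / φ (s * u)) = φ (s * y) / k := by
              field_simp
            have t2 : ((k : ℝ) - φ (s * u)) / (k : ℝ)
                * (φ (((k : A) - s) * y) / ((k : ℝ) - φ (s * u)))
                = φ (((k : A) - s) * y) / k := by
              field_simp
            rw [t1, t2, ← add_div, hsum, mul_comm, mul_div_assoc,
              div_self (ne_of_gt hk0), mul_one]
          · simp only [Pi.add_apply, Pi.smul_apply, smul_eq_mul, hψ₁def, hψ₂def, if_neg hy,
              hout y hy]
            ring
        have hseg : φ ∈ openSegment ℝ ψ₁ ψ₂ := by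
          refine ⟨φ (s * u) / (k : ℝ), ((k : ℝ) - φ (s * u)) / (k : ℝ),
            div_pos hlampos hk0, div_pos (by linarith) hk0, ?_, hdecomp⟩
          field_simp
          ring
        have hψ₁eq := (hφpure ψ₁ hψ₁SS ψ₂ hψ₂SS hseg).1
        have := congrFun hψ₁eq x
        simp only [hψ₁def, if_pos hx] at this
        rw [div_eq_iff hlne] at this
        rw [this]; ring
  -- multiplicativity over all of A
  have hmulA : ∀ a : A, ∀ x ∈ Gs, φ (a * x) = φ (a * u) * φ x := by
    intro a x hx
    obtain ⟨n, hn⟩ := harch a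
    have hsS : (n : A) - a ∈ S := hn
    have e1 : φ (a * x) = (n : ℝ) * φ x - φ (((n : A) - a) * x) := by
      have e : a * x = (n : A) * x - ((n : A) - a) * x := by ring
      rw [e, hsub _ (lgc_G_nat hG0 hGadd n x hx) _ (hGmulA _ x hx), hnat n x hx]
    have e2 : φ (a * u) = (n : ℝ) - φ (((n : A) - a) * u) := by
      have e : a * u = (n : A) * u - ((n : A) - a) * u := by ring
      rw [e, hsub _ (lgc_G_nat hG0 hGadd n u huG) _ (hGmulA _ u huG), hnat n u huG, hu1,
        mul_one]
    rw [e1, e2, hmulS _ hsS x hx]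
    ring
  -- the kernel ideal of the induced character
  let p : Ideal A :=
    { carrier := {a | φ (a * u) = 0}
      zero_mem' := by
        simp only [Set.mem_setOf_eq, zero_mul]
        exact hphi0
      add_mem' := by
        intro a b ha hb
        simp only [Set.mem_setOf_eq] at ha hb ⊢
        rw [add_mul, hadd _ (hGmulA a u huG) _ (hGmulA b u huG), ha, hb, add_zero]
      smul_mem' := by
        intro c a ha
        simp only [Set.mem_setOf_eq, smul_eq_mul] at ha ⊢
        rw [mul_assoc, hmulA c (a * u) (hGmulA a u huG), ha, mul_zero] }
  have hptop : p ≠ ⊤ := by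
    intro htop
    have h1p : (1 : A) ∈ p := by rw [htop]; exact Submodule.mem_top
    have : φ ((1 : A) * u) = 0 := h1p
    rw [one_mul, hu1] at this
    exact one_ne_zero this
  obtain ⟨𝔪, hmmax, hpm⟩ := Ideal.exists_le_maximal p hptop
  obtain ⟨s₀, hs₀S, hs₀nm, hs₀f⟩ := hloc 𝔪 hmmax
  have hχ0 : 0 ≤ φ (s₀ * u) := hpos _ (hGmulA s₀ u huG) (hSM _ hs₀S _ huM)
  have hχne : φ (s₀ * u) ≠ 0 := fun h => hs₀nm (hpm h)
  have hχpos : 0 < φ (s₀ * u) := lt_of_le_of_ne hχ0 (Ne.symm hχne)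
  have hsf0 : 0 ≤ φ (s₀ * f) := hpos _ (hGmulA s₀ f hfG) hs₀f
  have hf0 : 0 ≤ φ f := by
    have e := hmulA s₀ f hfG
    rw [e] at hsf0
    by_contra hneg
    push_neg at hneg
    nlinarith
  have hfeq0 : φ f = 0 := le_antisymm hφf hf0
  have efin := hmulA (1 + z) f hfG
  rw [hfeq0, mul_zero, ← hudef, hu1] at efin
  exact one_ne_zero efin
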